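/- arXiv:2603.11302 — 2 statements merged into one kernel-verified Lean document; each statement's English description precedes it below -/
import Mathlib

section
/- Let z̄ = (S̄, w̄⁰, w̄, ȳ⁰, ȳ, β̄) be a local strict-sense minimizer at which there is a local infimum gap. Then there exists a sequence (ẑ_n)_n of isolated feasible extended processes ẑ_n = (Ŝ_n, ŵ_n⁰, ŵ_n, ŷ_n⁰, ŷ_n, β̂_n) such that d(ẑ_n, z̄) → 0 as n → ∞; in particular (ŷ_n⁰(Ŝ_n), ŷ_n(Ŝ_n)) → (ȳ⁰(S̄), ȳ(S̄)). -/
open Metric Set Filter MeasureTheory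
open scoped RealInnerProductSpace

noncomputable section

abbrev Euc (n : ℕ) := EuclideanSpace ℝ (Fin n)
abbrev CVec (m₁ m₂ : ℕ) := EuclideanSpace ℝ (Fin m₁ ⊕ Fin m₂)

/-- The data and standing hypotheses of the unbounded/impulsive optimal control problem:
`C¹` bounded vector fields `f, g₁, …, g_m` (`m = m₁ + m₂`, indexed by `Fin m₁ ⊕ Fin m₂`),
a `C¹` cost `Ψ`, a closed control cone `𝒞 = 𝒞₁ × 𝒞₂` where `𝒞₁` contains the coordinate
lines and `𝒞₂` contains no line, a closed target `𝔗 ⊆ [0,∞) × ℝⁿ`, an initial state and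
an energy bound `K ∈ (0, +∞]`. -/
structure Setup (n m₁ m₂ : ℕ) where
  f : Euc n → Euc n
  g : (Fin m₁ ⊕ Fin m₂) → Euc n → Euc n
  Ψ : ℝ × Euc n → ℝ
  C1 : Set (Euc m₁)
  C2 : Set (Euc m₂)
  C : Set (CVec m₁ m₂)
  T : Set (ℝ × Euc n)
  x0 : Euc n
  K : EReal
  hm : 1 ≤ m₁ + m₂
  hf : ContDiff ℝ 1 f
  hf_bdd : ∃ M : ℝ, ∀ x, ‖f x‖ ≤ M ∧ ‖fderiv ℝ f x‖ ≤ M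
  hg : ∀ i, ContDiff ℝ 1 (g i)
  hg_bdd : ∀ i, ∃ M : ℝ, ∀ x, ‖g i x‖ ≤ M ∧ ‖fderiv ℝ (g i) x‖ ≤ M
  hΨ : ContDiff ℝ 1 Ψ
  hC1_closed : IsClosed C1
  hC1_cone : ∀ a : ℝ, 0 ≤ a → ∀ w ∈ C1, a • w ∈ C1
  hC1_lines : ∀ (i : Fin m₁) (t : ℝ), t • (EuclideanSpace.single i (1 : ℝ)) ∈ C1
  hC2_closed : IsClosed C2
  hC2_cone : ∀ a : ℝ, 0 ≤ a → ∀ w ∈ C2, a • w ∈ C2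
  hC2_noline : ∀ v : Euc m₂, v ≠ 0 → ¬ (∀ t : ℝ, t • v ∈ C2)
  hC_eq : C = {w : CVec m₁ m₂ |
      WithLp.toLp 2 (fun i : Fin m₁ => w (Sum.inl i)) ∈ C1 ∧ WithLp.toLp 2 (fun i : Fin m₂ => w (Sum.inr i)) ∈ C2}
  hT_closed : IsClosed T
  hT_sub : T ⊆ Set.Ici (0 : ℝ) ×ˢ Set.univ
  hK : 0 < K

variable {n m₁ m₂ : ℕ}

/-- An extended process `(S, w⁰, w, y⁰, y, β)`: `S > 0`, the controls `(w⁰, w)` are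
measurable with `w⁰ ≥ 0`, `w ∈ 𝒞` and `w⁰ + |w| = 1` a.e. on `[0,S]`, while `(y⁰, y, β)`
is the (absolutely continuous) solution, in integral form, of
`dy⁰/ds = w⁰`, `dy/ds = f(y)w⁰ + Σᵢ gᵢ(y)wⁱ`, `dβ/ds = |w|`, with
`(y⁰, y, β)(0) = (0, x̌, 0)`. -/
structure ExtProcess (P : Setup n m₁ m₂) where
  S : ℝ
  w0 : ℝ → ℝ
  w : ℝ → CVec m₁ m₂
  y0 : ℝ → ℝ
  y : ℝ → Euc n
  β : ℝ → ℝ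
  hS : 0 < S
  hw0_meas : AEStronglyMeasurable w0 (volume.restrict (Set.Icc 0 S))
  hw_meas : AEStronglyMeasurable w (volume.restrict (Set.Icc 0 S))
  hw0_nonneg : ∀ᵐ s ∂(volume.restrict (Set.Icc 0 S)), 0 ≤ w0 s
  hw_mem : ∀ᵐ s ∂(volume.restrict (Set.Icc 0 S)), w s ∈ P.C
  hw_norm : ∀ᵐ s ∂(volume.restrict (Set.Icc 0 S)), w0 s + ‖w s‖ = 1
  hy_cont : ContinuousOn y (Set.Icc 0 S)
  hy0 : ∀ s ∈ Set.Icc 0 S, y0 s = ∫ t in (0 : ℝ)..s, w0 t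
  hy : ∀ s ∈ Set.Icc 0 S, y s = P.x0 +
    ∫ t in (0 : ℝ)..s, (w0 t • P.f (y t) + ∑ i : Fin m₁ ⊕ Fin m₂, w t i • P.g i (y t))
  hβ : ∀ s ∈ Set.Icc 0 S, β s = ∫ t in (0 : ℝ)..s, ‖w t‖

variable {P : Setup n m₁ m₂}

/-- The control distance `d(z₁, z₂) := |S₁ − S₂| + ‖(w₂⁰, w₂) − (w₁⁰, w₁)‖_{L¹([0, S₁∧S₂])}`. -/
def dproc (z₁ z₂ : ExtProcess P) : ℝ :=
  |z₁.S - z₂.S| +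
    ∫ s in Set.Icc 0 (min z₁.S z₂.S), (|z₁.w0 s - z₂.w0 s| + ‖z₁.w s - z₂.w s‖)

/-- The (time, state, energy) endpoint of an extended process. -/
def endpt (z : ExtProcess P) : ℝ × Euc n × ℝ := (z.y0 z.S, z.y z.S, z.β z.S)

/-- A feasible extended process: `(y⁰(S), y(S)) ∈ 𝔗` and `β(S) ≤ K`. -/
def Feasible (z : ExtProcess P) : Prop :=
  (z.y0 z.S, z.y z.S) ∈ P.T ∧ (z.β z.S : EReal) ≤ P.K

/-- An embedded strict-sense process: `w⁰ > 0` a.e. -/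
def StrictSense (z : ExtProcess P) : Prop :=
  ∀ᵐ s ∂(volume.restrict (Set.Icc 0 z.S)), 0 < z.w0 s

/-- The strict-sense reachable set of radius `r` around `ẑ`: endpoints `(y⁰, y, β)(S)` of
embedded strict-sense processes `z` with `d(z, ẑ) < r`. -/
def Reach (zh : ExtProcess P) (r : ℝ) : Set (ℝ × Euc n × ℝ) :=
  {e | ∃ z : ExtProcess P, StrictSense z ∧ dproc z zh < r ∧ e = endpt z}

/-- `R^r_{W₊}(ẑ) ∩ (𝔗 × [0,K])`: the feasible part of the strict-sense reachable set. -/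
def FeasReach (zh : ExtProcess P) (r : ℝ) : Set (ℝ × Euc n × ℝ) :=
  {e ∈ Reach zh r | (e.1, e.2.1) ∈ P.T ∧ (e.2.2 : EReal) ≤ P.K}

/-- There is a local infimum gap at the feasible extended process `ẑ`:
`Ψ(ŷ⁰(Ŝ), ŷ(Ŝ)) < inf { Ψ(y⁰, y) : (y⁰,y,β) ∈ R^r_{W₊}(ẑ) ∩ (𝔗×[0,K]) }` for some `r > 0`. -/
def HasLocalGap (zh : ExtProcess P) : Prop :=
  ∃ r > (0 : ℝ),
    ((P.Ψ (zh.y0 zh.S, zh.y zh.S) : ℝ) : EReal) <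
      ⨅ e ∈ FeasReach zh r, ((P.Ψ (e.1, e.2.1) : ℝ) : EReal)

/-- `ẑ` is isolated: no feasible embedded strict-sense process in some `d`-neighborhood. -/
def Isolated (zh : ExtProcess P) : Prop :=
  ∃ r > (0 : ℝ), FeasReach zh r = ∅
/-- `z̄` is a local strict-sense minimizer: a feasible embedded strict-sense process whose
cost is minimal among feasible endpoints of nearby embedded strict-sense processes. -/
def IsLocalStrictSenseMinimizer (zb : ExtProcess P) : Prop :=
  Feasible zb ∧ StrictSense zb ∧
    ∃ r > (0 : ℝ), ∀ e ∈ FeasReach zb r, P.Ψ (zb.y0 zb.S, zb.y zb.S) ≤ P.Ψ (e.1, e.2.1)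

/-- There is a local infimum gap at the local strict-sense minimizer `z̄`: for every
`ε > 0` there is a feasible extended process `z` with `d(z, z̄) < ε` and strictly
smaller cost. -/
def HasStrictSenseGap (zb : ExtProcess P) : Prop :=
  ∀ ε > (0 : ℝ), ∃ z : ExtProcess P, Feasible z ∧ dproc z zb < ε ∧
    P.Ψ (z.y0 z.S, z.y z.S) < P.Ψ (zb.y0 zb.S, zb.y zb.S)


section AuxStmt15
open intervalIntegral
open Metric Set Filter MeasureTheory intervalIntegral


namespace Stmt15

variable {n m₁ m₂ : ℕ} {P : Setup n m₁ m₂}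

lemma coord_le_norm {ι : Type*} [Fintype ι] (x : EuclideanSpace ℝ ι) (i : ι) : |x i| ≤ ‖x‖ := by
  rw [EuclideanSpace.norm_eq, Real.le_sqrt (abs_nonneg _) (by positivity)]
  have h : |x i| ^ 2 = ‖x i‖ ^ 2 := by rw [Real.norm_eq_abs]
  rw [h]
  exact Finset.single_le_sum (f := fun j => ‖x j‖ ^ 2) (fun j _ => by positivity)
    (Finset.mem_univ i)

lemma exists_bound (P : Setup n m₁ m₂) : ∃ M : ℝ, 1 ≤ M ∧
    (∀ x, ‖P.f x‖ ≤ M ∧ ‖fderiv ℝ P.f x‖ ≤ M) ∧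
    (∀ i x, ‖P.g i x‖ ≤ M ∧ ‖fderiv ℝ (P.g i) x‖ ≤ M) := by
  obtain ⟨Mf, hMf⟩ := P.hf_bdd
  choose Mg hMg using P.hg_bdd
  obtain ⟨B, hB⟩ := (Finset.univ.image Mg).exists_le
  have hgB : ∀ i, Mg i ≤ B := fun i => hB _ (Finset.mem_image_of_mem _ (Finset.mem_univ i))
  refine ⟨max 1 (max Mf B), le_max_left _ _, fun x => ⟨?_, ?_⟩, fun i x => ⟨?_, ?_⟩⟩
  · exact (hMf x).1.trans (le_max_of_le_right (le_max_left _ _))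
  · exact (hMf x).2.trans (le_max_of_le_right (le_max_left _ _))
  · exact (hMg i x).1.trans ((hgB i).trans (le_max_of_le_right (le_max_right _ _)))
  · exact (hMg i x).2.trans ((hgB i).trans (le_max_of_le_right (le_max_right _ _)))

lemma lip_of_bdd {h : Euc n → Euc n} (hC : ContDiff ℝ 1 h) {M : ℝ}
    (hM : ∀ x, ‖fderiv ℝ h x‖ ≤ M) (a b : Euc n) : ‖h a - h b‖ ≤ M * ‖a - b‖ :=
  Convex.norm_image_sub_le_of_norm_fderiv_le
    (fun x _ => (hC.differentiable one_ne_zero).differentiableAt)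
    (fun x _ => hM x) convex_univ (mem_univ b) (mem_univ a)

lemma ae_bound (z : ExtProcess P) :
    ∀ᵐ t ∂(volume : Measure ℝ), t ∈ Icc (0:ℝ) z.S →
      0 ≤ z.w0 t ∧ z.w0 t ≤ 1 ∧ ‖z.w t‖ ≤ 1 := by
  have h1 := (ae_restrict_iff' measurableSet_Icc).1 z.hw0_nonneg
  have h2 := (ae_restrict_iff' measurableSet_Icc).1 z.hw_norm
  filter_upwards [h1, h2] with t ht1 ht2 ht
  have a1 := ht1 ht
  have a2 := ht2 ht
  have a3 := norm_nonneg (z.w t)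
  exact ⟨a1, by linarith, by linarith⟩

def Dfun (z1 z2 : ExtProcess P) : ℝ → ℝ :=
  fun t => |z1.w0 t - z2.w0 t| + ‖z1.w t - z2.w t‖

lemma Dfun_nonneg (z1 z2 : ExtProcess P) (t : ℝ) : 0 ≤ Dfun z1 z2 t :=
  add_nonneg (abs_nonneg _) (norm_nonneg _)

lemma dproc_def (z1 z2 : ExtProcess P) :
    dproc z1 z2 = |z1.S - z2.S| + ∫ t in Icc 0 (min z1.S z2.S), Dfun z1 z2 t := rfl

lemma dproc_nonneg (z1 z2 : ExtProcess P) : 0 ≤ dproc z1 z2 :=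
  add_nonneg (abs_nonneg _)
    (setIntegral_nonneg measurableSet_Icc fun t _ => Dfun_nonneg _ _ _)

structure NiceOn (z : ExtProcess P) (s : Set ℝ) : Prop where
  meas0 : AEStronglyMeasurable z.w0 (volume.restrict s)
  meas : AEStronglyMeasurable z.w (volume.restrict s)
  bdd : ∀ᵐ t ∂(volume.restrict s), 0 ≤ z.w0 t ∧ z.w0 t ≤ 1 ∧ ‖z.w t‖ ≤ 1

lemma niceOn_of_subset (z : ExtProcess P) {s : Set ℝ} (hsm : MeasurableSet s)
    (h : s ⊆ Icc 0 z.S) : NiceOn z s :=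
  ⟨z.hw0_meas.mono_measure (Measure.restrict_mono h le_rfl),
   z.hw_meas.mono_measure (Measure.restrict_mono h le_rfl),
   (ae_restrict_iff' hsm).2 ((ae_bound z).mono fun t ht hts => ht (h hts))⟩

structure Normal (z : ExtProcess P) : Prop where
  w0_out : ∀ t, t ∉ Icc (0:ℝ) z.S → z.w0 t = 1
  w_out : ∀ t, t ∉ Icc (0:ℝ) z.S → z.w t = 0
  meas0 : AEStronglyMeasurable z.w0 (volume : Measure ℝ)
  meas : AEStronglyMeasurable z.w (volume : Measure ℝ)

lemma Normal.niceOn {z : ExtProcess P} (hz : Normal z) (s : Set ℝ) : NiceOn z s :=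
  ⟨hz.meas0.restrict, hz.meas.restrict,
   ae_restrict_of_ae ((ae_bound z).mono fun t ht => by
     by_cases hts : t ∈ Icc (0:ℝ) z.S
     · exact ht hts
     · rw [hz.w0_out t hts, hz.w_out t hts]
       norm_num)⟩


def normalize (z : ExtProcess P) : ExtProcess P where
  S := z.S
  w0 := fun t => if t ∈ Icc (0:ℝ) z.S then z.w0 t else 1
  w := (Icc (0:ℝ) z.S).indicator z.w
  y0 := z.y0
  y := z.y
  β := z.β
  hS := z.hS
  hw0_meas := by
    refine z.hw0_meas.congr ?_
    filter_upwards [ae_restrict_mem measurableSet_Icc] with t ht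
    simp [ht]
  hw_meas := ((aestronglyMeasurable_indicator_iff measurableSet_Icc).2 z.hw_meas).restrict
  hw0_nonneg := by
    filter_upwards [z.hw0_nonneg, ae_restrict_mem measurableSet_Icc] with t h ht
    simpa [ht] using h
  hw_mem := by
    filter_upwards [z.hw_mem, ae_restrict_mem measurableSet_Icc] with t h ht
    simpa [Set.indicator_of_mem ht] using h
  hw_norm := by
    filter_upwards [z.hw_norm, ae_restrict_mem measurableSet_Icc] with t h ht
    simp only [Set.indicator_of_mem ht, if_pos ht]
    exact h
  hy_cont := z.hy_cont
  hy0 := by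
    intro s hs
    rw [z.hy0 s hs]
    refine intervalIntegral.integral_congr fun t ht => ?_
    rw [uIcc_of_le hs.1] at ht
    have h' : t ∈ Icc (0:ℝ) z.S := ⟨ht.1, ht.2.trans hs.2⟩
    simp [h']
  hy := by
    intro s hs
    rw [z.hy s hs]
    congr 1
    refine intervalIntegral.integral_congr fun t ht => ?_
    rw [uIcc_of_le hs.1] at ht
    have h' : t ∈ Icc (0:ℝ) z.S := ⟨ht.1, ht.2.trans hs.2⟩
    simp [h', Set.indicator_of_mem h']
  hβ := by
    intro s hs
    rw [z.hβ s hs]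
    refine intervalIntegral.integral_congr fun t ht => ?_
    rw [uIcc_of_le hs.1] at ht
    have h' : t ∈ Icc (0:ℝ) z.S := ⟨ht.1, ht.2.trans hs.2⟩
    simp [Set.indicator_of_mem h']

lemma normalize_normal (z : ExtProcess P) : Normal (normalize z) where
  w0_out := fun t ht => if_neg ht
  w_out := fun t ht => Set.indicator_of_notMem ht _
  meas0 := by
    have h : (normalize z).w0 = (Icc (0:ℝ) z.S).indicator z.w0
        + (Icc (0:ℝ) z.S)ᶜ.indicator (fun _ => 1) := by
      funext t
      show (if t ∈ Icc (0:ℝ) z.S then z.w0 t else 1) = _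
      by_cases ht : t ∈ Icc (0:ℝ) z.S
      · rw [if_pos ht, Pi.add_apply, Set.indicator_of_mem ht,
          Set.indicator_of_notMem (by simpa using ht), add_zero]
      · rw [if_neg ht, Pi.add_apply, Set.indicator_of_notMem ht,
          Set.indicator_of_mem (by simpa using ht), zero_add]
    rw [h]
    exact ((aestronglyMeasurable_indicator_iff measurableSet_Icc).2 z.hw0_meas).add
      (aestronglyMeasurable_const.indicator measurableSet_Icc.compl)
  meas := (aestronglyMeasurable_indicator_iff measurableSet_Icc).2 z.hw_meas

lemma normalize_S (z : ExtProcess P) : (normalize z).S = z.S := rfl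

lemma feasible_normalize (z : ExtProcess P) (h : Feasible z) : Feasible (normalize z) := h

lemma dproc_normalize_left (z z2 : ExtProcess P) : dproc (normalize z) z2 = dproc z z2 := by
  rw [dproc_def, dproc_def, normalize_S]
  congr 1
  refine setIntegral_congr_fun measurableSet_Icc fun t ht => ?_
  have h' : t ∈ Icc (0:ℝ) z.S := ⟨ht.1, ht.2.trans (min_le_left _ _)⟩
  simp only [Dfun, normalize, if_pos h', Set.indicator_of_mem h']

lemma min_sub_min_le (a b c : ℝ) : min a b - min a c ≤ |b - c| := by
  have h1 : min a b ≤ min (a + |b - c|) (c + |b - c|) :=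
    min_le_min (by linarith [abs_nonneg (b - c)]) (by linarith [le_abs_self (b - c)])
  rw [min_add_add_right] at h1
  linarith

lemma integrableOn_D {z1 z2 : ExtProcess P} {s : Set ℝ}
    (hfin : volume s < ⊤) (h1 : NiceOn z1 s) (h2 : NiceOn z2 s) :
    IntegrableOn (Dfun z1 z2) s volume := by
  have hm : AEStronglyMeasurable (Dfun z1 z2) (volume.restrict s) := by
    have ha := (h1.meas0.sub h2.meas0).norm
    have hb := (h1.meas.sub h2.meas).norm
    exact (ha.add hb).congr (Eventually.of_forall fun t => by simp [Dfun, Real.norm_eq_abs])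
  refine Integrable.mono'
    ((integrableOn_const hfin.ne) : IntegrableOn (fun _ => (4:ℝ)) s volume) hm ?_
  filter_upwards [h1.bdd, h2.bdd] with t ht1 ht2
  rw [Real.norm_of_nonneg (Dfun_nonneg _ _ _)]
  have e1 : |z1.w0 t - z2.w0 t| ≤ 2 := abs_le.2 ⟨by linarith [ht1.1, ht2.2.1], by linarith [ht2.1, ht1.2.1]⟩
  have e2 : ‖z1.w t - z2.w t‖ ≤ 2 := (norm_sub_le _ _).trans (by linarith [ht1.2.2, ht2.2.2])
  have := Dfun_nonneg z1 z2 t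
  unfold Dfun
  linarith

lemma D_int_mono {z1 z2 : ExtProcess P} {a b : ℝ} (hab : a ≤ b)
    (h1 : NiceOn z1 (Icc 0 b)) (h2 : NiceOn z2 (Icc 0 b)) :
    ∫ t in Icc 0 a, Dfun z1 z2 t ≤ ∫ t in Icc 0 b, Dfun z1 z2 t :=
  setIntegral_mono_set (integrableOn_D measure_Icc_lt_top h1 h2)
    (Eventually.of_forall fun t => Dfun_nonneg _ _ _)
    (HasSubset.Subset.eventuallyLE (Icc_subset_Icc_right hab))

lemma D_int_split {z1 z2 : ExtProcess P} {a b : ℝ} (hab : a ≤ b) (h0 : 0 ≤ a)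
    (h1 : NiceOn z1 (Icc 0 b)) (h2 : NiceOn z2 (Icc 0 b)) :
    ∫ t in Icc 0 b, Dfun z1 z2 t ≤ (∫ t in Icc 0 a, Dfun z1 z2 t) + 4 * (b - a) := by
  have hint : IntegrableOn (Dfun z1 z2) (Icc 0 b) volume :=
    integrableOn_D measure_Icc_lt_top h1 h2
  have hsplit : Icc (0:ℝ) b = Icc 0 a ∪ Ioc a b := (Icc_union_Ioc_eq_Icc h0 hab).symm
  have hu : ∫ t in Icc (0:ℝ) b, Dfun z1 z2 t
      = (∫ t in Icc 0 a, Dfun z1 z2 t) + ∫ t in Ioc a b, Dfun z1 z2 t := by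
    rw [hsplit]
    exact setIntegral_union (by rw [Set.disjoint_left]; rintro x hx hx2; exact absurd hx.2 (not_le.2 hx2.1)) measurableSet_Ioc
      (hint.mono_set (by rw [hsplit]; exact subset_union_left))
      (hint.mono_set (by rw [hsplit]; exact subset_union_right))
  rw [hu]
  have htail : ∫ t in Ioc a b, Dfun z1 z2 t ≤ 4 * (b - a) := by
    have hae : ∀ᵐ t ∂(volume : Measure ℝ), t ∈ Ioc a b → ‖Dfun z1 z2 t‖ ≤ 4 := by
      have hb1 := (ae_restrict_iff' measurableSet_Icc).1 h1.bdd
      have hb2 := (ae_restrict_iff' measurableSet_Icc).1 h2.bdd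
      filter_upwards [hb1, hb2] with t ht1 ht2 htm
      have htm' : t ∈ Icc (0:ℝ) b := ⟨h0.trans htm.1.le, htm.2⟩
      have a1 := ht1 htm'
      have a2 := ht2 htm'
      rw [Real.norm_of_nonneg (Dfun_nonneg _ _ _)]
      have e1 : |z1.w0 t - z2.w0 t| ≤ 2 :=
        abs_le.2 ⟨by linarith [a1.1, a2.2.1], by linarith [a2.1, a1.2.1]⟩
      have e2 : ‖z1.w t - z2.w t‖ ≤ 2 := (norm_sub_le _ _).trans (by linarith [a1.2.2, a2.2.2])
      unfold Dfun
      linarith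
    have hmeas : AEStronglyMeasurable (Dfun z1 z2) (volume.restrict (Ioc a b)) :=
      (hint.mono_set (by rw [hsplit]; exact subset_union_right)).aestronglyMeasurable
    have := norm_setIntegral_le_of_norm_le_const_ae' measure_Ioc_lt_top hae
    calc ∫ t in Ioc a b, Dfun z1 z2 t ≤ ‖∫ t in Ioc a b, Dfun z1 z2 t‖ := le_abs_self _
    _ ≤ 4 * (volume (Ioc a b)).toReal := this
    _ = 4 * (b - a) := by rw [Real.volume_Ioc, ENNReal.toReal_ofReal (by linarith)]
  linarith

lemma dproc_triangle (z1 z2 z3 : ExtProcess P) (h2 : Normal z2) :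
    dproc z1 z3 ≤ 5 * dproc z1 z2 + 5 * dproc z2 z3 := by
  have h1S := z1.hS; have h2S := z2.hS; have h3S := z3.hS
  set m13 := min z1.S z3.S with hm13
  set m12 := min z1.S z2.S with hm12
  set m23 := min z2.S z3.S with hm23
  have hm13_1 : m13 ≤ z1.S := min_le_left _ _
  have hm13_3 : m13 ≤ z3.S := min_le_right _ _
  have h013 : 0 ≤ m13 := le_of_lt (lt_min h1S h3S)
  have h012 : 0 ≤ m12 := le_of_lt (lt_min h1S h2S)
  have h023 : 0 ≤ m23 := le_of_lt (lt_min h2S h3S)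
  have n1 : NiceOn z1 (Icc 0 m13) :=
    niceOn_of_subset z1 measurableSet_Icc (Icc_subset_Icc_right hm13_1)
  have n3 : NiceOn z3 (Icc 0 m13) :=
    niceOn_of_subset z3 measurableSet_Icc (Icc_subset_Icc_right hm13_3)
  have n2 : ∀ s : Set ℝ, NiceOn z2 s := h2.niceOn
  have int13 : IntegrableOn (Dfun z1 z3) (Icc 0 m13) volume :=
    integrableOn_D measure_Icc_lt_top n1 n3
  have int12 : IntegrableOn (Dfun z1 z2) (Icc 0 m13) volume :=
    integrableOn_D measure_Icc_lt_top n1 (n2 _)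
  have int23 : IntegrableOn (Dfun z2 z3) (Icc 0 m13) volume :=
    integrableOn_D measure_Icc_lt_top (n2 _) n3
  have step1 : ∫ t in Icc 0 m13, Dfun z1 z3 t
      ≤ (∫ t in Icc 0 m13, Dfun z1 z2 t) + ∫ t in Icc 0 m13, Dfun z2 z3 t := by
    rw [← integral_add int12 int23]
    refine setIntegral_mono_on int13 (int12.add int23) measurableSet_Icc fun t _ => ?_
    have ha : |z1.w0 t - z3.w0 t| ≤ |z1.w0 t - z2.w0 t| + |z2.w0 t - z3.w0 t| :=
      abs_sub_le _ _ _
    have hb : ‖z1.w t - z3.w t‖ ≤ ‖z1.w t - z2.w t‖ + ‖z2.w t - z3.w t‖ := by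
      have := dist_triangle (z1.w t) (z2.w t) (z3.w t)
      simpa [dist_eq_norm] using this
    unfold Dfun
    linarith
  have step2 : ∫ t in Icc 0 m13, Dfun z1 z2 t
      ≤ (∫ t in Icc 0 m12, Dfun z1 z2 t) + 4 * |z2.S - z3.S| := by
    rcases le_total m13 m12 with h | h
    · have := D_int_mono h (niceOn_of_subset z1 measurableSet_Icc
        (Icc_subset_Icc_right (min_le_left _ _))) (n2 _)
      have h4 : (0:ℝ) ≤ 4 * |z2.S - z3.S| := by positivity
      linarith
    · have hs := D_int_split h h012 (niceOn_of_subset z1 measurableSet_Icc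
        (Icc_subset_Icc_right hm13_1)) (n2 _)
      have hdm : m13 - m12 ≤ |z3.S - z2.S| := min_sub_min_le z1.S z3.S z2.S
      rw [abs_sub_comm z3.S z2.S] at hdm
      linarith
  have step3 : ∫ t in Icc 0 m13, Dfun z2 z3 t
      ≤ (∫ t in Icc 0 m23, Dfun z2 z3 t) + 4 * |z1.S - z2.S| := by
    rcases le_total m13 m23 with h | h
    · have := D_int_mono h (n2 _) (niceOn_of_subset z3 measurableSet_Icc
        (Icc_subset_Icc_right (min_le_right _ _)))
      have h4 : (0:ℝ) ≤ 4 * |z1.S - z2.S| := by positivity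
      linarith
    · have hs := D_int_split h h023 (n2 _) (niceOn_of_subset z3 measurableSet_Icc
        (Icc_subset_Icc_right hm13_3))
      have hdm : m13 - m23 ≤ |z1.S - z2.S| := by
        have : min z3.S z1.S - min z3.S z2.S ≤ |z1.S - z2.S| := min_sub_min_le z3.S z1.S z2.S
        rw [hm13, hm23, min_comm z1.S z3.S, min_comm z2.S z3.S]
        exact this
      linarith
  have habs : |z1.S - z3.S| ≤ |z1.S - z2.S| + |z2.S - z3.S| := abs_sub_le _ _ _
  have e12 : dproc z1 z2 = |z1.S - z2.S| + ∫ t in Icc 0 m12, Dfun z1 z2 t := dproc_def _ _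
  have e23 : dproc z2 z3 = |z2.S - z3.S| + ∫ t in Icc 0 m23, Dfun z2 z3 t := dproc_def _ _
  have e13 : dproc z1 z3 = |z1.S - z3.S| + ∫ t in Icc 0 m13, Dfun z1 z3 t := dproc_def _ _
  have p12 : 0 ≤ ∫ t in Icc 0 m12, Dfun z1 z2 t :=
    setIntegral_nonneg measurableSet_Icc fun t _ => Dfun_nonneg _ _ _
  have p23 : 0 ≤ ∫ t in Icc 0 m23, Dfun z2 z3 t :=
    setIntegral_nonneg measurableSet_Icc fun t _ => Dfun_nonneg _ _ _
  linarith

def Ffun (P : Setup n m₁ m₂) (z : ExtProcess P) : ℝ → Euc n :=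
  fun t => z.w0 t • P.f (z.y t) + ∑ i : Fin m₁ ⊕ Fin m₂, z.w t i • P.g i (z.y t)

lemma hy_F (z : ExtProcess P) : ∀ s ∈ Icc (0:ℝ) z.S,
    z.y s = P.x0 + ∫ t in (0:ℝ)..s, Ffun P z t := z.hy

lemma ffun_meas (z : ExtProcess P) {s : Set ℝ} (hsm : MeasurableSet s)
    (hs : s ⊆ Icc 0 z.S) : AEStronglyMeasurable (Ffun P z) (volume.restrict s) := by
  have hy : AEStronglyMeasurable z.y (volume.restrict s) :=
    (z.hy_cont.mono hs).aestronglyMeasurable hsm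
  have hw0 : AEStronglyMeasurable z.w0 (volume.restrict s) :=
    z.hw0_meas.mono_measure (Measure.restrict_mono hs le_rfl)
  have hw : AEStronglyMeasurable z.w (volume.restrict s) :=
    z.hw_meas.mono_measure (Measure.restrict_mono hs le_rfl)
  refine AEStronglyMeasurable.add ?_ ?_
  · exact hw0.smul (P.hf.continuous.comp_aestronglyMeasurable hy)
  · refine Finset.aestronglyMeasurable_fun_sum _ fun i _ => ?_
    have hwi : AEStronglyMeasurable (fun t => z.w t i) (volume.restrict s) := by
      have := (EuclideanSpace.proj (𝕜 := ℝ) i).continuous.comp_aestronglyMeasurable hw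
      simpa using this
    exact hwi.smul ((P.hg i).continuous.comp_aestronglyMeasurable hy)

lemma ffun_norm_le {z : ExtProcess P} {M : ℝ} (hM1 : 1 ≤ M)
    (hMf : ∀ x, ‖P.f x‖ ≤ M) (hMg : ∀ i x, ‖P.g i x‖ ≤ M) {t : ℝ}
    (h1 : z.w0 t ≤ 1) (h0 : 0 ≤ z.w0 t) (h2 : ‖z.w t‖ ≤ 1) :
    ‖Ffun P z t‖ ≤ M * (1 + ((m₁ + m₂ : ℕ) : ℝ)) := by
  have hM0 : 0 ≤ M := by linarith
  have hsum : ‖∑ i : Fin m₁ ⊕ Fin m₂, z.w t i • P.g i (z.y t)‖ ≤ ((m₁ + m₂ : ℕ) : ℝ) * M := by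
    refine (norm_sum_le _ _).trans ?_
    have hb : ∀ i ∈ Finset.univ, ‖z.w t i • P.g i (z.y t)‖ ≤ M := by
      intro i _
      rw [norm_smul, Real.norm_eq_abs]
      have hci : |z.w t i| ≤ 1 := (coord_le_norm (z.w t) i).trans h2
      calc |z.w t i| * ‖P.g i (z.y t)‖ ≤ 1 * M :=
        mul_le_mul hci (hMg i _) (norm_nonneg _) zero_le_one
      _ = M := one_mul M
    have := Finset.sum_le_card_nsmul Finset.univ (fun i => ‖z.w t i • P.g i (z.y t)‖) M hb
    simpa [Fintype.card_sum, nsmul_eq_mul] using this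
  have h1' : ‖z.w0 t • P.f (z.y t)‖ ≤ M := by
    rw [norm_smul, Real.norm_eq_abs, abs_of_nonneg h0]
    calc z.w0 t * ‖P.f (z.y t)‖ ≤ 1 * M := mul_le_mul h1 (hMf _) (norm_nonneg _) zero_le_one
    _ = M := one_mul M
  calc ‖Ffun P z t‖ ≤ ‖z.w0 t • P.f (z.y t)‖
        + ‖∑ i : Fin m₁ ⊕ Fin m₂, z.w t i • P.g i (z.y t)‖ := norm_add_le _ _
  _ ≤ M + ((m₁ + m₂ : ℕ) : ℝ) * M := add_le_add h1' hsum
  _ = M * (1 + ((m₁ + m₂ : ℕ) : ℝ)) := by ring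

lemma ffun_integrableOn {z : ExtProcess P} {M : ℝ} (hM1 : 1 ≤ M)
    (hMf : ∀ x, ‖P.f x‖ ≤ M) (hMg : ∀ i x, ‖P.g i x‖ ≤ M) {s : Set ℝ}
    (hsm : MeasurableSet s) (hs : s ⊆ Icc 0 z.S) (hfin : volume s < ⊤) :
    IntegrableOn (Ffun P z) s volume := by
  refine Integrable.mono'
    ((integrableOn_const hfin.ne) :
      IntegrableOn (fun _ => M * (1 + ((m₁ + m₂ : ℕ) : ℝ))) s volume)
    (ffun_meas z hsm hs) ?_
  refine (ae_restrict_iff' hsm).2 ((ae_bound z).mono fun t ht hts => ?_)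
  obtain ⟨a0, a1, a2⟩ := ht (hs hts)
  exact ffun_norm_le hM1 hMf hMg a1 a0 a2

lemma w0_integrableOn (z : ExtProcess P) {s : Set ℝ} (hsm : MeasurableSet s)
    (hs : s ⊆ Icc 0 z.S) (hfin : volume s < ⊤) : IntegrableOn z.w0 s volume := by
  refine Integrable.mono'
    ((integrableOn_const hfin.ne) : IntegrableOn (fun _ => (1:ℝ)) s volume)
    (z.hw0_meas.mono_measure (Measure.restrict_mono hs le_rfl)) ?_
  refine (ae_restrict_iff' hsm).2 ((ae_bound z).mono fun t ht hts => ?_)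
  obtain ⟨a0, a1, _⟩ := ht (hs hts)
  rw [Real.norm_eq_abs, abs_of_nonneg a0]
  exact a1

set_option maxHeartbeats 1000000 in
lemma endpoint_est (z : ExtProcess P) : ∃ C : ℝ, 0 < C ∧ ∀ z' : ExtProcess P,
    |z'.y0 z'.S - z.y0 z.S| ≤ C * dproc z' z ∧ ‖z'.y z'.S - z.y z.S‖ ≤ C * dproc z' z := by
  classical
  obtain ⟨M, hM1, hMb, hMgb⟩ := exists_bound P
  have hMf : ∀ x, ‖P.f x‖ ≤ M := fun x => (hMb x).1
  have hMf' : ∀ x, ‖fderiv ℝ P.f x‖ ≤ M := fun x => (hMb x).2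
  have hMg : ∀ i x, ‖P.g i x‖ ≤ M := fun i x => (hMgb i x).1
  have hMg' : ∀ i x, ‖fderiv ℝ (P.g i) x‖ ≤ M := fun i x => (hMgb i x).2
  set mc : ℝ := ((m₁ + m₂ : ℕ) : ℝ) with hmc
  have hmc0 : (0:ℝ) ≤ mc := Nat.cast_nonneg _
  set CC : ℝ := M * (1 + mc) with hCCdef
  have hCC1 : 1 ≤ CC := by nlinarith
  have hCC0 : 0 < CC := by linarith
  refine ⟨CC * Real.exp (CC * z.S) + CC, add_pos (mul_pos hCC0 (Real.exp_pos _)) hCC0,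
    fun z' => ?_⟩
  set T := min z'.S z.S with hTdef
  have hT0 : 0 < T := lt_min z'.hS z.hS
  have hTz' : T ≤ z'.S := min_le_left _ _
  have hTz : T ≤ z.S := min_le_right _ _
  have hdd : dproc z' z = |z'.S - z.S| + ∫ t in Icc 0 T, Dfun z' z t := by
    rw [dproc_def, hTdef]
  set δ := ∫ t in Icc (0:ℝ) T, Dfun z' z t with hδdef
  have hδ0 : 0 ≤ δ := setIntegral_nonneg measurableSet_Icc fun t _ => Dfun_nonneg _ _ _
  have habsS : |z'.S - z.S| ≤ dproc z' z := by rw [hdd]; linarith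
  have hδle : δ ≤ dproc z' z := by rw [hdd]; linarith [abs_nonneg (z'.S - z.S)]
  have hdp0 : 0 ≤ dproc z' z := dproc_nonneg _ _
  have hTS' : (z'.S - T) + (z.S - T) = |z'.S - z.S| := by
    rcases le_total z'.S z.S with h | h
    · rw [abs_of_nonpos (by linarith), hTdef, min_eq_left h]; ring
    · rw [abs_of_nonneg (by linarith), hTdef, min_eq_right h]; ring
  have hIccT' : Icc (0:ℝ) T ⊆ Icc 0 z'.S := Icc_subset_Icc_right hTz'
  have hIccT : Icc (0:ℝ) T ⊆ Icc 0 z.S := Icc_subset_Icc_right hTz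
  have iw0T' : IntegrableOn z'.w0 (Icc 0 T) volume :=
    w0_integrableOn z' measurableSet_Icc hIccT' measure_Icc_lt_top
  have iw0T : IntegrableOn z.w0 (Icc 0 T) volume :=
    w0_integrableOn z measurableSet_Icc hIccT measure_Icc_lt_top
  have nice' : NiceOn z' (Icc 0 T) := niceOn_of_subset z' measurableSet_Icc hIccT'
  have nice : NiceOn z (Icc 0 T) := niceOn_of_subset z measurableSet_Icc hIccT
  have iD : IntegrableOn (Dfun z' z) (Icc 0 T) volume :=
    integrableOn_D measure_Icc_lt_top nice' nice
  -- (a) the y0-estimate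
  have ha : |z'.y0 z'.S - z.y0 z.S| ≤ dproc z' z := by
    rw [z'.hy0 z'.S ⟨z'.hS.le, le_rfl⟩, z.hy0 z.S ⟨z.hS.le, le_rfl⟩]
    have s1' : IntervalIntegrable z'.w0 volume 0 T :=
      (intervalIntegrable_iff_integrableOn_Icc_of_le hT0.le).2 iw0T'
    have s2' : IntervalIntegrable z'.w0 volume T z'.S :=
      (intervalIntegrable_iff_integrableOn_Icc_of_le hTz').2
        (w0_integrableOn z' measurableSet_Icc (Icc_subset_Icc hT0.le le_rfl)
          measure_Icc_lt_top)
    have s1 : IntervalIntegrable z.w0 volume 0 T :=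
      (intervalIntegrable_iff_integrableOn_Icc_of_le hT0.le).2 iw0T
    have s2 : IntervalIntegrable z.w0 volume T z.S :=
      (intervalIntegrable_iff_integrableOn_Icc_of_le hTz).2
        (w0_integrableOn z measurableSet_Icc (Icc_subset_Icc hT0.le le_rfl)
          measure_Icc_lt_top)
    rw [← integral_add_adjacent_intervals s1' s2', ← integral_add_adjacent_intervals s1 s2]
    have hAA : |(∫ t in (0:ℝ)..T, z'.w0 t) - ∫ t in (0:ℝ)..T, z.w0 t| ≤ δ := by
      rw [← intervalIntegral.integral_sub s1' s1]
      have h1 : |∫ t in (0:ℝ)..T, (z'.w0 t - z.w0 t)|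
          ≤ ∫ t in (0:ℝ)..T, |z'.w0 t - z.w0 t| := by
        simpa [Real.norm_eq_abs] using
          intervalIntegral.norm_integral_le_integral_norm
            (f := fun t => z'.w0 t - z.w0 t) (μ := volume) hT0.le
      refine h1.trans ?_
      rw [intervalIntegral.integral_of_le hT0.le, ← integral_Icc_eq_integral_Ioc]
      refine setIntegral_mono_on ((iw0T'.sub iw0T).abs) iD measurableSet_Icc fun t _ => ?_
      exact le_add_of_nonneg_right (norm_nonneg _)
    have tail : ∀ (w : ExtProcess P), T ≤ w.S →
        |∫ t in T..w.S, w.w0 t| ≤ w.S - T := by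
      intro w hw
      rw [intervalIntegral.integral_of_le hw]
      have hb : ∀ᵐ t ∂(volume : Measure ℝ), t ∈ Ioc T w.S → ‖w.w0 t‖ ≤ 1 := by
        filter_upwards [ae_bound w] with t ht htm
        obtain ⟨a0, a1, _⟩ := ht ⟨hT0.le.trans htm.1.le, htm.2⟩
        rw [Real.norm_eq_abs, abs_of_nonneg a0]; exact a1
      have hsub : Ioc T w.S ⊆ Icc 0 w.S := fun t htm => ⟨hT0.le.trans htm.1.le, htm.2⟩
      have hm := w.hw0_meas.mono_measure (Measure.restrict_mono hsub le_rfl)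
      have := norm_setIntegral_le_of_norm_le_const_ae' measure_Ioc_lt_top hb
      rw [measureReal_def, Real.volume_Ioc, ENNReal.toReal_ofReal (by linarith), one_mul] at this
      simpa [Real.norm_eq_abs] using this
    have hB' := tail z' hTz'
    have hB := tail z hTz
    set A' := ∫ t in (0:ℝ)..T, z'.w0 t
    set A := ∫ t in (0:ℝ)..T, z.w0 t
    set B' := ∫ t in T..z'.S, z'.w0 t
    set B := ∫ t in T..z.S, z.w0 t
    have h1 : (A' + B') - (A + B) = (A' - A) + (B' - B) := by ring
    have h2 : |(A' + B') - (A + B)| ≤ |A' - A| + (|B'| + |B|) := by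
      rw [h1]
      refine (abs_add_le _ _).trans (add_le_add le_rfl ?_)
      calc |B' - B| = |B' + -B| := by rw [sub_eq_add_neg]
      _ ≤ |B'| + |-B| := abs_add_le _ _
      _ = |B'| + |B| := by rw [abs_neg]
    rw [hdd]
    calc |(A' + B') - (A + B)| ≤ |A' - A| + (|B'| + |B|) := h2
    _ ≤ δ + ((z'.S - T) + (z.S - T)) := by linarith
    _ = |z'.S - z.S| + δ := by rw [hTS']; ring
  -- (b) the state estimate, via Gronwall
  set Δ : ℝ → ℝ := fun t => ‖z'.y t - z.y t‖ with hΔdef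
  have hΔ0 : ∀ t, 0 ≤ Δ t := fun t => norm_nonneg _
  have hΔcont : ContinuousOn Δ (Icc 0 T) :=
    ((z'.hy_cont.mono hIccT').sub (z.hy_cont.mono hIccT)).norm
  have hΔint : IntegrableOn Δ (Icc 0 T) volume := hΔcont.integrableOn_Icc
  set G : ℝ → ℝ := fun s => ∫ t in (0:ℝ)..s, Δ t with hGdef
  have hFii' : ∀ {a b : ℝ}, 0 ≤ a → a ≤ b → b ≤ z'.S →
      IntervalIntegrable (Ffun P z') volume a b := fun h0 hab hb =>
    (intervalIntegrable_iff_integrableOn_Icc_of_le hab).2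
      (ffun_integrableOn hM1 hMf hMg measurableSet_Icc
        (Icc_subset_Icc h0 hb) measure_Icc_lt_top)
  have hFii : ∀ {a b : ℝ}, 0 ≤ a → a ≤ b → b ≤ z.S →
      IntervalIntegrable (Ffun P z) volume a b := fun h0 hab hb =>
    (intervalIntegrable_iff_integrableOn_Icc_of_le hab).2
      (ffun_integrableOn hM1 hMf hMg measurableSet_Icc
        (Icc_subset_Icc h0 hb) measure_Icc_lt_top)
  have key : ∀ s ∈ Icc (0:ℝ) T, Δ s ≤ CC * δ + CC * G s := by
    intro s hs
    obtain ⟨hs0, hsT⟩ := hs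
    have hyz' := hy_F z' s ⟨hs0, hsT.trans hTz'⟩
    have hyz := hy_F z s ⟨hs0, hsT.trans hTz⟩
    have hFa' : IntervalIntegrable (Ffun P z') volume 0 s := hFii' le_rfl hs0 (hsT.trans hTz')
    have hFa : IntervalIntegrable (Ffun P z) volume 0 s := hFii le_rfl hs0 (hsT.trans hTz)
    have hsub : z'.y s - z.y s = ∫ t in (0:ℝ)..s, (Ffun P z' t - Ffun P z t) := by
      rw [hyz', hyz, intervalIntegral.integral_sub hFa' hFa]
      abel
    have hptwise : ∀ᵐ t ∂(volume.restrict (Icc (0:ℝ) s)),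
        ‖Ffun P z' t - Ffun P z t‖ ≤ CC * Dfun z' z t + CC * Δ t := by
      have n1 : NiceOn z' (Icc 0 s) :=
        niceOn_of_subset z' measurableSet_Icc (Icc_subset_Icc_right (hsT.trans hTz'))
      have n2 : NiceOn z (Icc 0 s) :=
        niceOn_of_subset z measurableSet_Icc (Icc_subset_Icc_right (hsT.trans hTz))
      filter_upwards [n1.bdd, n2.bdd] with t ht1 ht2
      obtain ⟨b0', b1', b2'⟩ := ht1
      obtain ⟨b0, b1, b2⟩ := ht2
      have e0 : ‖z'.w0 t • P.f (z'.y t) - z.w0 t • P.f (z.y t)‖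
          ≤ M * |z'.w0 t - z.w0 t| + M * Δ t := by
        have hsp : z'.w0 t • P.f (z'.y t) - z.w0 t • P.f (z.y t)
            = (z'.w0 t - z.w0 t) • P.f (z'.y t)
              + z.w0 t • (P.f (z'.y t) - P.f (z.y t)) := by
          rw [sub_smul, smul_sub]; abel
        rw [hsp]
        refine (norm_add_le _ _).trans ?_
        have l1 : ‖(z'.w0 t - z.w0 t) • P.f (z'.y t)‖ ≤ |z'.w0 t - z.w0 t| * M := by
          rw [norm_smul, Real.norm_eq_abs]
          exact mul_le_mul_of_nonneg_left (hMf _) (abs_nonneg _)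
        have l2 : ‖z.w0 t • (P.f (z'.y t) - P.f (z.y t))‖ ≤ M * Δ t := by
          rw [norm_smul, Real.norm_eq_abs, abs_of_nonneg b0]
          calc z.w0 t * ‖P.f (z'.y t) - P.f (z.y t)‖ ≤ 1 * (M * ‖z'.y t - z.y t‖) :=
            mul_le_mul b1 (lip_of_bdd P.hf hMf' _ _) (norm_nonneg _) zero_le_one
          _ = M * Δ t := by rw [one_mul]
        have : |z'.w0 t - z.w0 t| * M = M * |z'.w0 t - z.w0 t| := mul_comm _ _
        linarith
      have eg : ‖(∑ i : Fin m₁ ⊕ Fin m₂, z'.w t i • P.g i (z'.y t))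
            - ∑ i : Fin m₁ ⊕ Fin m₂, z.w t i • P.g i (z.y t)‖
          ≤ mc * (M * ‖z'.w t - z.w t‖ + M * Δ t) := by
        rw [← Finset.sum_sub_distrib]
        refine (norm_sum_le _ _).trans ?_
        have hb : ∀ i ∈ Finset.univ,
            ‖z'.w t i • P.g i (z'.y t) - z.w t i • P.g i (z.y t)‖
              ≤ M * ‖z'.w t - z.w t‖ + M * Δ t := by
          intro i _
          have hsp : z'.w t i • P.g i (z'.y t) - z.w t i • P.g i (z.y t)
              = (z'.w t i - z.w t i) • P.g i (z'.y t)
                + z.w t i • (P.g i (z'.y t) - P.g i (z.y t)) := by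
            rw [sub_smul, smul_sub]; abel
          rw [hsp]
          refine (norm_add_le _ _).trans ?_
          have l1 : ‖(z'.w t i - z.w t i) • P.g i (z'.y t)‖ ≤ M * ‖z'.w t - z.w t‖ := by
            rw [norm_smul, Real.norm_eq_abs]
            have hco : |z'.w t i - z.w t i| ≤ ‖z'.w t - z.w t‖ := by
              have := coord_le_norm (z'.w t - z.w t) i
              simpa using this
            calc |z'.w t i - z.w t i| * ‖P.g i (z'.y t)‖ ≤ ‖z'.w t - z.w t‖ * M :=
              mul_le_mul hco (hMg i _) (norm_nonneg _) (norm_nonneg _)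
            _ = M * ‖z'.w t - z.w t‖ := mul_comm _ _
          have l2 : ‖z.w t i • (P.g i (z'.y t) - P.g i (z.y t))‖ ≤ M * Δ t := by
            rw [norm_smul, Real.norm_eq_abs]
            have hci : |z.w t i| ≤ 1 := (coord_le_norm (z.w t) i).trans b2
            calc |z.w t i| * ‖P.g i (z'.y t) - P.g i (z.y t)‖
                ≤ 1 * (M * ‖z'.y t - z.y t‖) :=
              mul_le_mul hci (lip_of_bdd (P.hg i) (hMg' i) _ _) (norm_nonneg _) zero_le_one
            _ = M * Δ t := by rw [one_mul]
          linarith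
        have hsum := Finset.sum_le_card_nsmul Finset.univ _ _ hb
        simpa [Fintype.card_sum, nsmul_eq_mul, hmc, mul_add] using hsum
      have hF : Ffun P z' t - Ffun P z t
          = (z'.w0 t • P.f (z'.y t) - z.w0 t • P.f (z.y t))
            + ((∑ i : Fin m₁ ⊕ Fin m₂, z'.w t i • P.g i (z'.y t))
              - ∑ i : Fin m₁ ⊕ Fin m₂, z.w t i • P.g i (z.y t)) := by
        unfold Ffun; abel
      rw [hF]
      refine (norm_add_le _ _).trans ?_
      have hD : Dfun z' z t = |z'.w0 t - z.w0 t| + ‖z'.w t - z.w t‖ := rfl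
      have h0a : (0:ℝ) ≤ |z'.w0 t - z.w0 t| := abs_nonneg _
      have h0b : (0:ℝ) ≤ ‖z'.w t - z.w t‖ := norm_nonneg _
      have hM0 : (0:ℝ) ≤ M := by linarith
      rw [hD, hCCdef]
      nlinarith [e0, eg, mul_nonneg (mul_nonneg hM0 hmc0) h0a, mul_nonneg hM0 h0b]
    have hDint_s : IntegrableOn (Dfun z' z) (Icc 0 s) volume :=
      iD.mono_set (Icc_subset_Icc_right hsT)
    have hΔint_s : IntegrableOn Δ (Icc 0 s) volume :=
      hΔint.mono_set (Icc_subset_Icc_right hsT)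
    have hRi1 : IntervalIntegrable (fun t => CC * Dfun z' z t) volume 0 s :=
      (intervalIntegrable_iff_integrableOn_Icc_of_le hs0).2 (hDint_s.const_mul CC)
    have hRi2 : IntervalIntegrable (fun t => CC * Δ t) volume 0 s :=
      (intervalIntegrable_iff_integrableOn_Icc_of_le hs0).2 (hΔint_s.const_mul CC)
    have step : Δ s ≤ ∫ t in (0:ℝ)..s, (CC * Dfun z' z t + CC * Δ t) := by
      have c1 : Δ s = ‖∫ t in (0:ℝ)..s, (Ffun P z' t - Ffun P z t)‖ := by
        rw [show Δ s = ‖z'.y s - z.y s‖ from rfl, hsub]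
      rw [c1]
      refine (intervalIntegral.norm_integral_le_integral_norm hs0).trans ?_
      refine intervalIntegral.integral_mono_ae_restrict hs0 (hFa'.sub hFa).norm
        (hRi1.add hRi2) ?_
      exact hptwise
    have hsplit2 : ∫ t in (0:ℝ)..s, (CC * Dfun z' z t + CC * Δ t)
        = CC * (∫ t in (0:ℝ)..s, Dfun z' z t) + CC * ∫ t in (0:ℝ)..s, Δ t := by
      rw [intervalIntegral.integral_add hRi1 hRi2, intervalIntegral.integral_const_mul,
        intervalIntegral.integral_const_mul]
    have hDs : ∫ t in (0:ℝ)..s, Dfun z' z t ≤ δ := by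
      rw [intervalIntegral.integral_of_le hs0, ← integral_Icc_eq_integral_Ioc]
      exact setIntegral_mono_set iD (Eventually.of_forall fun t => Dfun_nonneg _ _ _)
        (HasSubset.Subset.eventuallyLE (Icc_subset_Icc_right hsT))
    have hmul : CC * (∫ t in (0:ℝ)..s, Dfun z' z t) ≤ CC * δ :=
      mul_le_mul_of_nonneg_left hDs hCC0.le
    have hGs : G s = ∫ t in (0:ℝ)..s, Δ t := by rw [hGdef]
    rw [hsplit2] at step
    rw [hGs]
    linarith
  have hGcont : ContinuousOn G (Icc 0 T) := by
    have h1 := continuousOn_primitive (f := Δ) (a := 0) (b := T) (μ := volume) hΔint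
    refine h1.congr fun x hx => ?_
    show (∫ t in (0:ℝ)..x, Δ t) = ∫ t in Ioc 0 x, Δ t
    exact intervalIntegral.integral_of_le hx.1
  have hGderiv : ∀ x ∈ Ico (0:ℝ) T, HasDerivWithinAt G (Δ x) (Ici x) x := by
    intro x hx
    obtain ⟨hx0, hxT⟩ := hx
    have hii : IntervalIntegrable Δ volume 0 x :=
      (intervalIntegrable_iff_integrableOn_Icc_of_le hx0).2
        (hΔint.mono_set (Icc_subset_Icc_right hxT.le))
    have hmem : Icc x T ∈ nhdsWithin x (Ici x) := by
      rw [← nhdsWithin_Icc_eq_nhdsGE hxT]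
      exact self_mem_nhdsWithin
    have hmeasat : StronglyMeasurableAtFilter Δ (nhdsWithin x (Ioi x)) volume :=
      ⟨Icc x T, nhdsWithin_mono x Ioi_subset_Ici_self hmem,
        (hΔcont.mono (Icc_subset_Icc_left hx0)).aestronglyMeasurable measurableSet_Icc⟩
    have hcw : ContinuousWithinAt Δ (Ici x) x := by
      have h1 : ContinuousWithinAt Δ (Icc x T) x :=
        (hΔcont x ⟨hx0, hxT.le⟩).mono (Icc_subset_Icc_left hx0)
      rwa [ContinuousWithinAt, nhdsWithin_Icc_eq_nhdsGE hxT] at h1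
    exact intervalIntegral.integral_hasDerivWithinAt_right hii hmeasat
      (hcw.mono Ioi_subset_Ici_self)
  have hG0 : ‖G 0‖ ≤ (0:ℝ) := by
    rw [hGdef]
    simp
  have hbound : ∀ x ∈ Ico (0:ℝ) T, ‖Δ x‖ ≤ CC * ‖G x‖ + CC * δ := by
    intro x hx
    have hGx0 : 0 ≤ G x := by
      rw [hGdef]
      exact intervalIntegral.integral_nonneg hx.1 fun t _ => hΔ0 t
    rw [Real.norm_of_nonneg (hΔ0 x), Real.norm_of_nonneg hGx0]
    have hk := key x ⟨hx.1, hx.2.le⟩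
    linarith
  have gron := norm_le_gronwallBound_of_norm_deriv_right_le hGcont hGderiv hG0 hbound
    T ⟨hT0.le, le_rfl⟩
  have gron2 : ‖G T‖ ≤ 0 * Real.exp (CC * T) + CC * δ / CC * (Real.exp (CC * T) - 1) := by
    rw [gronwallBound_of_K_ne_0 (ne_of_gt hCC0)] at gron
    simpa using gron
  have hGT : G T ≤ δ * (Real.exp (CC * T) - 1) := by
    have h1 : G T ≤ ‖G T‖ := le_abs_self _
    have h2 : 0 * Real.exp (CC * T) + CC * δ / CC * (Real.exp (CC * T) - 1)
        = δ * (Real.exp (CC * T) - 1) := by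
      field_simp
      ring
    linarith [gron2]
  have hΔT : Δ T ≤ CC * Real.exp (CC * z.S) * δ := by
    have hkT := key T ⟨hT0.le, le_rfl⟩
    have hexp : Real.exp (CC * T) ≤ Real.exp (CC * z.S) :=
      Real.exp_le_exp.2 (mul_le_mul_of_nonneg_left hTz hCC0.le)
    have k1 : CC * G T ≤ CC * (δ * (Real.exp (CC * T) - 1)) :=
      mul_le_mul_of_nonneg_left hGT hCC0.le
    have k2 : CC * δ * Real.exp (CC * T) ≤ CC * δ * Real.exp (CC * z.S) :=
      mul_le_mul_of_nonneg_left hexp (mul_nonneg hCC0.le hδ0)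
    nlinarith [hkT, k1, k2]
  have tailnorm : ∀ (w : ExtProcess P), T ≤ w.S → ‖w.y w.S - w.y T‖ ≤ CC * (w.S - T) := by
    intro w hw
    have h1 := hy_F w w.S ⟨w.hS.le, le_rfl⟩
    have h2 := hy_F w T ⟨hT0.le, hw⟩
    have hFa : IntervalIntegrable (Ffun P w) volume 0 T :=
      (intervalIntegrable_iff_integrableOn_Icc_of_le hT0.le).2
        (ffun_integrableOn hM1 hMf hMg measurableSet_Icc (Icc_subset_Icc_right hw)
          measure_Icc_lt_top)
    have hFb : IntervalIntegrable (Ffun P w) volume T w.S :=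
      (intervalIntegrable_iff_integrableOn_Icc_of_le hw).2
        (ffun_integrableOn hM1 hMf hMg measurableSet_Icc (Icc_subset_Icc hT0.le le_rfl)
          measure_Icc_lt_top)
    have hadj := integral_add_adjacent_intervals hFa hFb
    have hdiff : w.y w.S - w.y T = ∫ t in T..w.S, Ffun P w t := by
      rw [h1, h2, ← hadj]
      abel
    rw [hdiff, intervalIntegral.integral_of_le hw]
    have hball : ∀ᵐ t ∂(volume : Measure ℝ), t ∈ Ioc T w.S → ‖Ffun P w t‖ ≤ CC := by
      filter_upwards [ae_bound w] with t ht htm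
      obtain ⟨a0, a1, a2⟩ := ht ⟨hT0.le.trans htm.1.le, htm.2⟩
      rw [hCCdef, hmc]
      exact ffun_norm_le hM1 hMf hMg a1 a0 a2
    have hmes := ffun_meas w measurableSet_Ioc
      (fun t htm => ⟨hT0.le.trans htm.1.le, htm.2⟩)
    have := norm_setIntegral_le_of_norm_le_const_ae' measure_Ioc_lt_top hball
    rwa [measureReal_def, Real.volume_Ioc, ENNReal.toReal_ofReal (by linarith)] at this
  have tz' := tailnorm z' hTz'
  have tz := tailnorm z hTz
  have hbfinal : ‖z'.y z'.S - z.y z.S‖ ≤ (CC * Real.exp (CC * z.S) + CC) * dproc z' z := by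
    have e : z'.y z'.S - z.y z.S
        = (z'.y z'.S - z'.y T) + ((z'.y T - z.y T) + (z.y T - z.y z.S)) := by abel
    have htri : ‖z'.y z'.S - z.y z.S‖
        ≤ ‖z'.y z'.S - z'.y T‖ + (‖z'.y T - z.y T‖ + ‖z.y T - z.y z.S‖) := by
      rw [e]
      exact (norm_add_le _ _).trans
        (add_le_add le_rfl (norm_add_le _ _))
    have hnz : ‖z.y T - z.y z.S‖ = ‖z.y z.S - z.y T‖ := norm_sub_rev _ _
    have hΔTd : ‖z'.y T - z.y T‖ = Δ T := rfl
    have k3 : CC * Real.exp (CC * z.S) * δ ≤ CC * Real.exp (CC * z.S) * dproc z' z :=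
      mul_le_mul_of_nonneg_left hδle (mul_nonneg hCC0.le (Real.exp_pos _).le)
    have k5 : CC * ((z'.S - T) + (z.S - T)) = CC * |z'.S - z.S| := by rw [hTS']
    have k6 : CC * |z'.S - z.S| ≤ CC * dproc z' z :=
      mul_le_mul_of_nonneg_left habsS hCC0.le
    rw [hnz, hΔTd] at htri
    nlinarith [htri, tz, tz', hΔT, k3, k5, k6]
  refine ⟨?_, hbfinal⟩
  have hC1' : 1 ≤ CC * Real.exp (CC * z.S) + CC := by
    nlinarith [mul_pos hCC0 (Real.exp_pos (CC * z.S))]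
  exact ha.trans (le_mul_of_one_le_left hdp0 hC1')


lemma exists_isolated_near (zb : ExtProcess P) {r0 : ℝ} (hr : 0 < r0)
    (hminp : ∀ e ∈ FeasReach zb r0, P.Ψ (zb.y0 zb.S, zb.y zb.S) ≤ P.Ψ (e.1, e.2.1))
    (hgap : HasStrictSenseGap zb) {ε : ℝ} (hε : 0 < ε) :
    ∃ zk : ExtProcess P, Feasible zk ∧ Isolated zk ∧ dproc zk zb < ε := by
  obtain ⟨z, hzf, hzd, hzΨ⟩ := hgap (min ε (r0 / 20)) (lt_min hε (by linarith))
  refine ⟨normalize z, feasible_normalize z hzf, ?_, by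
    rw [dproc_normalize_left]; exact hzd.trans_le (min_le_left _ _)⟩
  have hnorm : Normal (normalize z) := normalize_normal z
  obtain ⟨C, hC, hest⟩ := endpoint_est (normalize z)
  have hgappos : 0 < P.Ψ (zb.y0 zb.S, zb.y zb.S) - P.Ψ (z.y0 z.S, z.y z.S) := by linarith
  obtain ⟨η, hη, hΨc⟩ := Metric.continuousAt_iff.1
    (P.hΨ.continuous.continuousAt (x := (z.y0 z.S, z.y z.S))) _ hgappos
  refine ⟨min (η / (2 * C)) (r0 / 20),
    lt_min (div_pos hη (by linarith)) (by linarith), ?_⟩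
  rw [Set.eq_empty_iff_forall_notMem]
  rintro e ⟨⟨z', hz's, hz'd, rfl⟩, hz'T, hz'K⟩
  -- upper bound on cost via minimality
  have htri := dproc_triangle z' (normalize z) zb hnorm
  have hd2 : dproc (normalize z) zb < r0 / 20 := by
    rw [dproc_normalize_left]; exact hzd.trans_le (min_le_right _ _)
  have hd3 : dproc z' (normalize z) < r0 / 20 := hz'd.trans_le (min_le_right _ _)
  have hz'zb : dproc z' zb < r0 := by linarith
  have hmem : endpt z' ∈ FeasReach zb r0 := ⟨⟨z', hz's, hz'zb, rfl⟩, hz'T, hz'K⟩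
  have hup := hminp _ hmem
  simp only [endpt] at hup
  -- lower bound on cost via continuity and the endpoint estimate
  have hd4 : dproc z' (normalize z) < η / (2 * C) := hz'd.trans_le (min_le_left _ _)
  have hest' := hest z'
  have hCne : C ≠ 0 := ne_of_gt hC
  have hCd : C * dproc z' (normalize z) < η / 2 := by
    calc C * dproc z' (normalize z) < C * (η / (2 * C)) := mul_lt_mul_of_pos_left hd4 hC
    _ = η / 2 := by field_simp
  have hdist : dist ((z'.y0 z'.S, z'.y z'.S) : ℝ × Euc n) (z.y0 z.S, z.y z.S) < η := by
    rw [Prod.dist_eq]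
    have h1 : dist (z'.y0 z'.S) (z.y0 z.S) < η := by
      rw [Real.dist_eq]
      have := hest'.1
      have hnn : (normalize z).y0 (normalize z).S = z.y0 z.S := rfl
      rw [hnn] at this
      linarith
    have h2 : dist (z'.y z'.S) (z.y z.S) < η := by
      rw [dist_eq_norm]
      have := hest'.2
      have hnn : (normalize z).y (normalize z).S = z.y z.S := rfl
      rw [hnn] at this
      linarith
    exact max_lt h1 h2
  have := hΨc hdist
  rw [Real.dist_eq] at this
  have hlow : P.Ψ (z'.y0 z'.S, z'.y z'.S) < P.Ψ (zb.y0 zb.S, zb.y zb.S) := by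
    have h := abs_lt.1 this
    linarith [h.1, h.2]
  have : ((endpt z').1, (endpt z').2.1) = (z'.y0 z'.S, z'.y z'.S) := rfl
  linarith [hup]
end Stmt15
end AuxStmt15

/-- Proposition 4.1: a local strict-sense minimizer at which there is a
local infimum gap is the `d`-limit of a sequence of isolated feasible extended processes;
in particular the corresponding endpoints converge. -/
theorem stmt15 (zb : ExtProcess P)
    (hmin : IsLocalStrictSenseMinimizer zb) (hgap : HasStrictSenseGap zb) :
    ∃ zs : ℕ → ExtProcess P,
      (∀ k, Feasible (zs k) ∧ Isolated (zs k)) ∧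
      Filter.Tendsto (fun k => dproc (zs k) zb) Filter.atTop (nhds 0) ∧
      Filter.Tendsto (fun k => ((zs k).y0 (zs k).S, (zs k).y (zs k).S))
        Filter.atTop (nhds (zb.y0 zb.S, zb.y zb.S)) := by

  obtain ⟨hfb, hsb, r0, hr0, hminp⟩ := hmin
  have H : ∀ k : ℕ, ∃ zk : ExtProcess P,
      Feasible zk ∧ Isolated zk ∧ dproc zk zb < 1 / (k + 1) :=
    fun k => Stmt15.exists_isolated_near zb hr0 hminp hgap (by positivity)
  choose zs h1 h2 h3 using H
  obtain ⟨Cb, hCb, hCbest⟩ := Stmt15.endpoint_est zb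
  have hd0 : Tendsto (fun k => dproc (zs k) zb) atTop (nhds 0) :=
    squeeze_zero (fun k => Stmt15.dproc_nonneg _ _) (fun k => (h3 k).le)
      tendsto_one_div_add_atTop_nhds_zero_nat
  refine ⟨zs, fun k => ⟨h1 k, h2 k⟩, hd0, ?_⟩
  rw [tendsto_iff_dist_tendsto_zero]
  refine squeeze_zero (fun k => dist_nonneg) (fun k => ?_)
    (by simpa using hd0.const_mul Cb)
  rw [Prod.dist_eq]
  refine max_le ?_ ?_
  · rw [Real.dist_eq]
    exact (hCbest (zs k)).1
  · rw [dist_eq_norm]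
    exact (hCbest (zs k)).2
end
end

section
/- Let η(s) := (1/2)sin(π(s − 1/2)) − 1/2. Suppose u ∈ L¹([0,1], [0,+∞)) and x = (x¹, x²) : [0,1] → ℝ² is absolutely continuous, with x(0) = (0,0), dx¹/dt = u(t) and dx²/dt = 1 + η(x²(t))u(t) for a.e. t ∈ [0,1], x²(1) = 1, and ∫₀¹ u(t)dt ≤ 1. Then u = 0 a.e. on [0,1] and x(t) = (0, t) for all t ∈ [0,1]; in particular the corresponding final cost is Ψ(x¹(1), x²(1)) = 1 for Ψ(x¹, x²) := (x¹ − 1)². -/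
open MeasureTheory Set intervalIntegral

noncomputable section

/-- The function `η(s) = (1/2) sin(π(s − 1/2)) − 1/2` of the illustrative example. -/
def ηfun (s : ℝ) : ℝ := (1 / 2) * Real.sin (Real.pi * (s - 1 / 2)) - 1 / 2

lemma ηfun_nonpos (s : ℝ) : ηfun s ≤ 0 := by
  have := Real.sin_le_one (Real.pi * (s - 1 / 2)); unfold ηfun; linarith

lemma ηfun_ge (s : ℝ) : -1 ≤ ηfun s := by
  have := Real.neg_one_le_sin (Real.pi * (s - 1 / 2)); unfold ηfun; linarith

lemma ηfun_cont : Continuous ηfun := by unfold ηfun; continuity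

lemma ηfun_neg {s : ℝ} (h1 : -1 < s) (h2 : s < 1) : ηfun s < 0 := by
  have hle := Real.sin_le_one (Real.pi * (s - 1 / 2))
  have hne : Real.sin (Real.pi * (s - 1 / 2)) ≠ 1 := by
    intro h
    rw [Real.sin_eq_one_iff] at h
    obtain ⟨k, hk⟩ := h
    have hπ := Real.pi_pos
    have hs : s = 1 + 2 * (k : ℝ) := by
      have h : Real.pi * (1 / 2 + k * 2) = Real.pi * (s - 1 / 2) := by ring_nf; ring_nf at hk; linarith
      have := mul_left_cancel₀ (ne_of_gt hπ) h
      linarith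
    have hk1 : (-1 : ℝ) < (k : ℝ) := by linarith
    have hk2 : (k : ℝ) < 0 := by linarith
    have : (-1 : ℤ) < k := by exact_mod_cast hk1
    have : k < 0 := by exact_mod_cast hk2
    omega
  have : Real.sin (Real.pi * (s - 1 / 2)) < 1 := lt_of_le_of_ne hle hne
  unfold ηfun; linarith

/-- illustrative example, Section 4.4: for the system
`dx¹/dt = u`, `dx²/dt = 1 + η(x²) u` with control `u ∈ L¹([0,1], [0,∞))`, initial state
`(0,0)`, final constraint `x²(1) = 1` and energy bound `∫₀¹ u ≤ 1` (the trajectory is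
encoded in integral form, which expresses absolute continuity together with the ODE and
the initial condition), the only feasible process is `u = 0` a.e. with trajectory
`x(t) = (0, t)`; in particular `Ψ(x¹(1), x²(1)) = (x¹(1) − 1)² = 1`. -/
theorem stmt19 (u : ℝ → ℝ) (x1 x2 : ℝ → ℝ)
    (hu_int : IntegrableOn u (Set.Icc 0 1) volume)
    (hu_nonneg : ∀ᵐ t ∂(volume.restrict (Set.Icc (0 : ℝ) 1)), 0 ≤ u t)
    (hx1 : ∀ t ∈ Set.Icc (0 : ℝ) 1, x1 t = ∫ s in (0 : ℝ)..t, u s)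
    (hx2cont : ContinuousOn x2 (Set.Icc (0 : ℝ) 1))
    (hx2 : ∀ t ∈ Set.Icc (0 : ℝ) 1, x2 t = t + ∫ s in (0 : ℝ)..t, ηfun (x2 s) * u s)
    (hfinal : x2 1 = 1)
    (henergy : (∫ t in (0 : ℝ)..1, u t) ≤ 1) :
    (∀ᵐ t ∂(volume.restrict (Set.Icc (0 : ℝ) 1)), u t = 0) ∧
    (∀ t ∈ Set.Icc (0 : ℝ) 1, x1 t = 0 ∧ x2 t = t) ∧
    (x1 1 - 1) ^ 2 = 1 := by
  set g : ℝ → ℝ := fun t => ηfun (x2 t) * u t with hgdef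
  -- integrability of g on [0,1]
  have hg_meas : AEStronglyMeasurable g (volume.restrict (Set.Icc (0 : ℝ) 1)) := by
    have h1 : ContinuousOn (fun t => ηfun (x2 t)) (Set.Icc (0 : ℝ) 1) :=
      ηfun_cont.comp_continuousOn hx2cont
    exact (h1.aestronglyMeasurable measurableSet_Icc).mul hu_int.aestronglyMeasurable
  have hg_int : IntegrableOn g (Set.Icc (0 : ℝ) 1) volume := by
    refine Integrable.mono hu_int hg_meas ?_
    refine Filter.Eventually.of_forall fun t => ?_
    simp only [hgdef, Real.norm_eq_abs, abs_mul]
    have h1 : |ηfun (x2 t)| ≤ 1 :=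
      abs_le.2 ⟨ηfun_ge _, (ηfun_nonpos _).trans zero_le_one⟩
    nlinarith [abs_nonneg (u t), abs_nonneg (ηfun (x2 t))]
  -- interval integrability
  have hu_ii : ∀ t ∈ Set.Icc (0 : ℝ) 1, IntervalIntegrable u volume 0 t := by
    intro t ht
    have : IntegrableOn u (Set.uIcc 0 t) volume := by
      rw [Set.uIcc_of_le ht.1]
      exact hu_int.mono_set (Set.Icc_subset_Icc le_rfl ht.2)
    exact this.intervalIntegrable
  have hg_ii : ∀ t ∈ Set.Icc (0 : ℝ) 1, IntervalIntegrable g volume 0 t := by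
    intro t ht
    have : IntegrableOn g (Set.uIcc 0 t) volume := by
      rw [Set.uIcc_of_le ht.1]
      exact hg_int.mono_set (Set.Icc_subset_Icc le_rfl ht.2)
    exact this.intervalIntegrable
  -- pointwise a.e. sign facts on [0,1]
  have hsign : ∀ᵐ s ∂(volume.restrict (Set.Icc (0 : ℝ) 1)), g s ≤ 0 ∧ -u s ≤ g s := by
    filter_upwards [hu_nonneg] with s hs
    refine ⟨mul_nonpos_of_nonpos_of_nonneg (ηfun_nonpos _) hs, ?_⟩
    have h := mul_nonneg (by linarith [ηfun_ge (x2 s)] : (0:ℝ) ≤ ηfun (x2 s) + 1) hs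
    show -u s ≤ ηfun (x2 s) * u s
    nlinarith
  -- x2 t ≤ t on [0,1]
  have hub : ∀ t ∈ Set.Icc (0 : ℝ) 1, x2 t ≤ t := by
    intro t ht
    rw [hx2 t ht]
    have h0 : (∫ s in (0 : ℝ)..t, g s) ≤ ∫ s in (0 : ℝ)..t, (0 : ℝ) := by
      refine intervalIntegral.integral_mono_ae_restrict ht.1 (hg_ii t ht)
        intervalIntegrable_const ?_
      have hsub : Set.Icc (0 : ℝ) t ⊆ Set.Icc (0 : ℝ) 1 :=
        Set.Icc_subset_Icc le_rfl ht.2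
      filter_upwards [ae_restrict_of_ae_restrict_of_subset hsub hsign] with s hs
      exact hs.1
    simp only [intervalIntegral.integral_zero] at h0
    linarith
  -- energy on subintervals
  have hmono : ∀ t ∈ Set.Icc (0 : ℝ) 1, (∫ s in (0 : ℝ)..t, u s) ≤ 1 := by
    intro t ht
    refine le_trans ?_ henergy
    refine intervalIntegral.integral_mono_interval le_rfl ht.1 ht.2 ?_ (hu_ii 1 ⟨zero_le_one, le_rfl⟩)
    exact ae_restrict_of_ae_restrict_of_subset Set.Ioc_subset_Icc_self hu_nonneg
  -- t - 1 ≤ x2 t on [0,1]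
  have hlb : ∀ t ∈ Set.Icc (0 : ℝ) 1, t - 1 ≤ x2 t := by
    intro t ht
    rw [hx2 t ht]
    have h0 : (∫ s in (0 : ℝ)..t, -u s) ≤ ∫ s in (0 : ℝ)..t, g s := by
      refine intervalIntegral.integral_mono_ae_restrict ht.1 ((hu_ii t ht).neg) (hg_ii t ht) ?_
      have hsub : Set.Icc (0 : ℝ) t ⊆ Set.Icc (0 : ℝ) 1 :=
        Set.Icc_subset_Icc le_rfl ht.2
      filter_upwards [ae_restrict_of_ae_restrict_of_subset hsub hsign] with s hs
      exact hs.2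
    rw [intervalIntegral.integral_neg] at h0
    have := hmono t ht
    linarith
  -- ∫₀¹ g = 0
  have hzero : (∫ s in (0 : ℝ)..1, g s) = 0 := by
    have h := hx2 1 ⟨zero_le_one, le_rfl⟩
    rw [hfinal] at h
    linarith
  -- g = 0 a.e. on (0,1]
  have hg0 : ∀ᵐ s ∂(volume.restrict (Set.Icc (0 : ℝ) 1)), g s = 0 := by
    have hnn : 0 ≤ᵐ[volume.restrict (Set.Ioc (0:ℝ) 1 ∪ Set.Ioc 1 0)] fun s => -g s := by
      rw [Set.Ioc_eq_empty (by norm_num : ¬ (1:ℝ) < 0), Set.union_empty]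
      filter_upwards [ae_restrict_of_ae_restrict_of_subset Set.Ioc_subset_Icc_self hsign] with s hs
      simpa using hs.1
    have hzero' : (∫ s in (0 : ℝ)..1, -g s) = 0 := by
      rw [intervalIntegral.integral_neg, hzero, neg_zero]
    have := (intervalIntegral.integral_eq_zero_iff_of_nonneg_ae hnn
      ((hg_ii 1 ⟨zero_le_one, le_rfl⟩).neg)).1 hzero'
    rw [Set.Ioc_eq_empty (by norm_num : ¬ (1:ℝ) < 0), Set.union_empty] at this
    rw [← Measure.restrict_congr_set Ioc_ae_eq_Icc]
    filter_upwards [this] with s hs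
    have : -g s = 0 := hs
    linarith
  -- u = 0 a.e. on [0,1]
  have hu0 : ∀ᵐ t ∂(volume.restrict (Set.Icc (0 : ℝ) 1)), u t = 0 := by
    rw [← Measure.restrict_congr_set Ioo_ae_eq_Icc]
    have hg0' := (ae_restrict_congr_set (Ioo_ae_eq_Icc)).2 hg0
    filter_upwards [hg0', ae_restrict_mem measurableSet_Ioo] with t hgt hmem
    have htIcc : t ∈ Set.Icc (0 : ℝ) 1 := ⟨hmem.1.le, hmem.2.le⟩
    have hx2lt : x2 t < 1 := lt_of_le_of_lt (hub t htIcc) hmem.2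
    have hx2gt : -1 < x2 t := lt_of_lt_of_le (by linarith [hmem.1]) (hlb t htIcc)
    have hη : ηfun (x2 t) ≠ 0 := ne_of_lt (ηfun_neg hx2gt hx2lt)
    rcases mul_eq_zero.1 hgt with h | h
    · exact absurd h hη
    · exact h
  refine ⟨hu0, ?_, ?_⟩
  · -- trajectory identification
    have hu0' : ∀ᵐ s ∂volume, s ∈ Set.Icc (0 : ℝ) 1 → u s = 0 := ae_imp_of_ae_restrict hu0
    have hint0 : ∀ t ∈ Set.Icc (0 : ℝ) 1, (∫ s in (0 : ℝ)..t, u s) = 0 := by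
      intro t ht
      have h : (∫ s in (0 : ℝ)..t, u s) = ∫ s in (0 : ℝ)..t, (0 : ℝ) := by
        refine intervalIntegral.integral_congr_ae ?_
        filter_upwards [hu0'] with s hs hmem
        rw [Set.uIoc_of_le ht.1] at hmem
        exact hs ⟨hmem.1.le, hmem.2.trans ht.2⟩
      simpa using h
    have hintg0 : ∀ t ∈ Set.Icc (0 : ℝ) 1, (∫ s in (0 : ℝ)..t, g s) = 0 := by
      intro t ht
      have h : (∫ s in (0 : ℝ)..t, g s) = ∫ s in (0 : ℝ)..t, (0 : ℝ) := by
        refine intervalIntegral.integral_congr_ae ?_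
        filter_upwards [hu0'] with s hs hmem
        rw [Set.uIoc_of_le ht.1] at hmem
        have : u s = 0 := hs ⟨hmem.1.le, hmem.2.trans ht.2⟩
        simp [hgdef, this]
      simpa using h
    intro t ht
    refine ⟨?_, ?_⟩
    · rw [hx1 t ht, hint0 t ht]
    · rw [hx2 t ht, hintg0 t ht, add_zero]
  · -- final cost
    have hu0' : ∀ᵐ s ∂volume, s ∈ Set.Icc (0 : ℝ) 1 → u s = 0 := ae_imp_of_ae_restrict hu0
    have hx11 : x1 1 = 0 := by
      rw [hx1 1 ⟨zero_le_one, le_rfl⟩]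
      have h : (∫ s in (0 : ℝ)..1, u s) = ∫ s in (0 : ℝ)..1, (0 : ℝ) := by
        refine intervalIntegral.integral_congr_ae ?_
        filter_upwards [hu0'] with s hs hmem
        rw [Set.uIoc_of_le zero_le_one] at hmem
        exact hs ⟨hmem.1.le, hmem.2⟩
      simpa using h
    rw [hx11]; norm_num
end
end
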